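/- Let (S,∘) be an RC-quasigroup and M its structure monoid. Then the map ν from the free abelian monoid ℕ^(S) (finitely supported functions S → ℕ) to M defined by ν(s₁⋯sₙ) = Πₙ(s₁,…,sₙ) is well defined (independent of the chosen ordering s₁,…,sₙ of a multiset) and is a right I-structure on M: ν is a bijection, ν(1) = 1, ν(s) = s for every s in S, and for every a in ℕ^(S) one has {ν(a·s) : s ∈ S} = {ν(a)·s : s ∈ S}. -/

import Mathlib

/-- The right-cyclic law: `(x∘y)∘(x∘z) = (y∘x)∘(y∘z)`. -/
def RCLaw {S : Type*} (op : S → S → S) : Prop :=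
  ∀ x y z : S, op (op x y) (op x z) = op (op y x) (op y z)

/-- The defining relations `s(s∘t) = t(t∘s)`, `s ≠ t`, of the structure monoid, as a relation
on the free monoid over `S`. -/
def rcRel {S : Type*} (op : S → S → S) : FreeMonoid S → FreeMonoid S → Prop :=
  fun a b => ∃ s t : S, s ≠ t ∧
    a = FreeMonoid.of s * FreeMonoid.of (op s t) ∧ b = FreeMonoid.of t * FreeMonoid.of (op t s)

/-- The structure monoid of `(S,∘)`: the monoid presented by generators `S` and relations
`s(s∘t) = t(t∘s)` for `s ≠ t`, realized as the quotient of the free monoid on `S` by the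
congruence generated by these relations. -/
abbrev StructureMonoid {S : Type*} (op : S → S → S) := (conGen (rcRel op)).Quotient

/-- The canonical generator of the structure monoid associated with `s ∈ S`. -/
def smGen {S : Type*} (op : S → S → S) (s : S) : StructureMonoid op :=
  (conGen (rcRel op)).mk' (FreeMonoid.of s)

/-- The monomials `Ωₙ`: `OmegaFin op n x` is `Ω_{n+1}(x₀,…,xₙ)`, defined by `Ω₁(x₁) = x₁` and
`Ωₙ(x₁,…,xₙ) = Ω_{n−1}(x₁,…,x_{n−1}) ∘ Ω_{n−1}(x₁,…,x_{n−2},xₙ)`. -/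
def OmegaFin {S : Type*} (op : S → S → S) : (n : ℕ) → (Fin (n + 1) → S) → S
  | 0, x => x 0
  | n + 1, x =>
      op (OmegaFin op n fun i => x i.castSucc)
         (OmegaFin op n fun i => if (i : ℕ) = n then x (Fin.last (n + 1)) else x i.castSucc)

/-- `Πₙ(x₁,…,xₙ) = ι(Ω₁(x₁))·ι(Ω₂(x₁,x₂))·…·ι(Ωₙ(x₁,…,xₙ))`, computed in the monoid `M`. -/
def PiFin {S M : Type*} [Monoid M] (op : S → S → S) (ι : S → M) (n : ℕ) (x : Fin n → S) : M :=
  ((List.finRange n).map fun i =>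
    ι (OmegaFin op i.val fun j : Fin (i.val + 1) => x (Fin.castLE i.isLt j))).prod

namespace Statement11Aux

variable {S : Type*} (op : S → S → S)

/-- `OmegaR op l t = Ω(l.reverse, t)`: the `Ω` monomial with last argument `t` and the earlier
arguments given by `l`, most recent first. -/
def OmegaR : List S → S → S
  | [], t => t
  | a :: l, t => op (OmegaR l a) (OmegaR l t)

theorem omegaR_nil (t : S) : OmegaR op [] t = t := rfl

theorem omegaR_cons (a : S) (l : List S) (t : S) :
    OmegaR op (a :: l) t = op (OmegaR op l a) (OmegaR op l t) := rfl

theorem omegaR_perm (hRC : RCLaw op) {l l' : List S} (h : l.Perm l') :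
    ∀ t, OmegaR op l t = OmegaR op l' t := by
  induction h with
  | nil => intro t; rfl
  | cons x h ih => intro t; rw [omegaR_cons, omegaR_cons, ih, ih]
  | swap x y l =>
      intro t
      rw [omegaR_cons, omegaR_cons, omegaR_cons, omegaR_cons, omegaR_cons, omegaR_cons]
      exact hRC _ _ _
  | trans h1 h2 ih1 ih2 => intro t; rw [ih1, ih2]

theorem omegaR_bij (hlb : ∀ s : S, Function.Bijective (op s)) :
    ∀ l : List S, Function.Bijective (OmegaR op l)
  | [] => Function.bijective_id
  | a :: l => by
      have h : OmegaR op (a :: l) = (op (OmegaR op l a)) ∘ OmegaR op l :=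
        funext fun t => rfl
      rw [h]
      exact (hlb _).comp (omegaR_bij hlb l)

/-- The defining relation in the structure monoid, valid also when `s = t`. -/
theorem genrel (s t : S) :
    smGen op s * smGen op (op s t) = smGen op t * smGen op (op t s) := by
  by_cases h : s = t
  · subst h; rfl
  · calc smGen op s * smGen op (op s t)
        = (conGen (rcRel op)).mk' (FreeMonoid.of s * FreeMonoid.of (op s t)) :=
          (map_mul _ _ _).symm
      _ = (conGen (rcRel op)).mk' (FreeMonoid.of t * FreeMonoid.of (op t s)) := by
          have : (conGen (rcRel op)) (FreeMonoid.of s * FreeMonoid.of (op s t))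
              (FreeMonoid.of t * FreeMonoid.of (op t s)) :=
            ConGen.Rel.of _ _ ⟨s, t, h, rfl, rfl⟩
          exact (Con.eq _).mpr this
      _ = smGen op t * smGen op (op t s) := map_mul _ _ _

/-- `PiL op l = Π(l.reverse)` in the structure monoid. -/
def PiL : List S → StructureMonoid op
  | [] => 1
  | a :: l => PiL l * smGen op (OmegaR op l a)

theorem piL_nil : PiL op ([] : List S) = 1 := rfl

theorem piL_cons (a : S) (l : List S) :
    PiL op (a :: l) = PiL op l * smGen op (OmegaR op l a) := rfl

theorem piL_perm (hRC : RCLaw op) {l l' : List S} (h : l.Perm l') :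
    PiL op l = PiL op l' := by
  induction h with
  | nil => rfl
  | cons x h ih => rw [piL_cons, piL_cons, ih, omegaR_perm op hRC h]
  | swap x y l =>
      rw [piL_cons, piL_cons, piL_cons, piL_cons, omegaR_cons, omegaR_cons,
        mul_assoc, mul_assoc]
      rw [genrel op (OmegaR op l x) (OmegaR op l y)]
  | trans h1 h2 ih1 ih2 => rw [ih1, ih2]

/-- The candidate `ν` on multisets. -/
def nuM (hRC : RCLaw op) (m : Multiset S) : StructureMonoid op :=
  Quotient.liftOn m (PiL op) fun _ _ h => piL_perm op hRC h

theorem nuM_coe (hRC : RCLaw op) (l : List S) : nuM op hRC ↑l = PiL op l := rfl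

/-- The candidate `ν`. -/
noncomputable def nu (hRC : RCLaw op) (a : S →₀ ℕ) : StructureMonoid op :=
  nuM op hRC (Finsupp.toMultiset a)

theorem nu_toList (hRC : RCLaw op) (a : S →₀ ℕ) :
    nu op hRC a = PiL op (Finsupp.toMultiset a).toList := by
  rw [nu, ← nuM_coe op hRC, Multiset.coe_toList]

theorem toMultiset_add_single (a : S →₀ ℕ) (t : S) :
    Finsupp.toMultiset (a + Finsupp.single t 1) = t ::ₘ Finsupp.toMultiset a := by
  rw [Finsupp.toMultiset_add, Finsupp.toMultiset_single, one_nsmul, add_comm,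
    Multiset.singleton_add]

theorem nu_add_single (hRC : RCLaw op) (a : S →₀ ℕ) (t : S) :
    nu op hRC (a + Finsupp.single t 1)
      = nu op hRC a * smGen op (OmegaR op (Finsupp.toMultiset a).toList t) := by
  rw [nu, toMultiset_add_single]
  have h1 : (t ::ₘ Finsupp.toMultiset a) = ↑(t :: (Finsupp.toMultiset a).toList) := by
    rw [← Multiset.cons_coe, Multiset.coe_toList]
  rw [h1, nuM_coe, piL_cons, nu_toList]

/-- The bijection `t ↦ OmegaR op l t` for the canonical list of `a`, as an `Equiv`. -/
noncomputable def gE (hlb : ∀ s : S, Function.Bijective (op s)) (a : S →₀ ℕ) : S ≃ S :=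
  Equiv.ofBijective _ (omegaR_bij op hlb (Finsupp.toMultiset a).toList)

theorem gE_apply (hlb : ∀ s : S, Function.Bijective (op s)) (a : S →₀ ℕ) (t : S) :
    gE op hlb a t = OmegaR op (Finsupp.toMultiset a).toList t := rfl

/-- One right-multiplication step, pulled back through `ν`. -/
noncomputable def fstep (hlb : ∀ s : S, Function.Bijective (op s)) (a : S →₀ ℕ) (s : S) :
    S →₀ ℕ :=
  a + Finsupp.single ((gE op hlb a).symm s) 1

theorem nu_fstep (hRC : RCLaw op) (hlb : ∀ s : S, Function.Bijective (op s))
    (a : S →₀ ℕ) (s : S) :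
    nu op hRC (fstep op hlb a s) = nu op hRC a * smGen op s := by
  rw [fstep, nu_add_single]
  exact congrArg (fun z => nu op hRC a * smGen op z) ((gE op hlb a).apply_symm_apply s)

theorem gE_symm_eq (hRC : RCLaw op) (hlb : ∀ s : S, Function.Bijective (op s))
    {a : S →₀ ℕ} {l : List S} (hl : Finsupp.toMultiset a = ↑l) {w z : S}
    (h : OmegaR op l z = w) : (gE op hlb a).symm w = z := by
  rw [Equiv.symm_apply_eq, gE_apply]
  have : ((Finsupp.toMultiset a).toList : Multiset S) = ↑l := by
    rw [Multiset.coe_toList, hl]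
  rw [omegaR_perm op hRC (Multiset.coe_eq_coe.mp this), h]

theorem fstep_comm (hRC : RCLaw op) (hlb : ∀ s : S, Function.Bijective (op s))
    (a : S →₀ ℕ) (s t : S) :
    fstep op hlb (fstep op hlb a s) (op s t) = fstep op hlb (fstep op hlb a t) (op t s) := by
  set l := (Finsupp.toMultiset a).toList with hl
  have hal : Finsupp.toMultiset a = ↑l := (Multiset.coe_toList _).symm
  set u := (gE op hlb a).symm s with hu
  set v := (gE op hlb a).symm t with hv
  have hsu : OmegaR op l u = s := (gE op hlb a).apply_symm_apply s
  have htv : OmegaR op l v = t := (gE op hlb a).apply_symm_apply t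
  have key : ∀ (w z : S),
      (gE op hlb (a + Finsupp.single w 1)).symm (op (OmegaR op l w) (OmegaR op l z)) = z := by
    intro w z
    refine gE_symm_eq op hRC hlb (a := a + Finsupp.single w 1) (l := w :: l) ?_ ?_
    · rw [toMultiset_add_single, hal, Multiset.cons_coe]
    · rw [omegaR_cons]
  have h1 : fstep op hlb (fstep op hlb a s) (op s t)
      = a + Finsupp.single u 1 + Finsupp.single v 1 := by
    rw [fstep, fstep, ← hu]
    congr 2
    rw [← hsu, ← htv]
    exact key u v
  have h2 : fstep op hlb (fstep op hlb a t) (op t s)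
      = a + Finsupp.single v 1 + Finsupp.single u 1 := by
    rw [fstep, fstep, ← hv]
    congr 2
    rw [← hsu, ← htv]
    exact key v u
  rw [h1, h2, add_assoc, add_assoc, add_comm (Finsupp.single u 1)]

/-- One `fstep` as an element of `Function.End`. -/
noncomputable def estep (hlb : ∀ s : S, Function.Bijective (op s)) (s : S) :
    Function.End (S →₀ ℕ) :=
  fun a => fstep op hlb a s

/-- The anti-action of the free monoid on `ℕ^(S)`. -/
noncomputable def phi (hlb : ∀ s : S, Function.Bijective (op s)) :
    FreeMonoid S →* (Function.End (S →₀ ℕ))ᵐᵒᵖ :=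
  FreeMonoid.lift fun s => MulOpposite.op (estep op hlb s)

theorem phi_rel (hRC : RCLaw op) (hlb : ∀ s : S, Function.Bijective (op s)) :
    conGen (rcRel op) ≤ Con.ker (phi op hlb) := by
  apply Con.conGen_le.mpr
  rintro x y ⟨s, t, _hst, rfl, rfl⟩
  rw [Con.ker_rel, map_mul, map_mul, phi, FreeMonoid.lift_eval_of, FreeMonoid.lift_eval_of,
    FreeMonoid.lift_eval_of, FreeMonoid.lift_eval_of, ← MulOpposite.op_mul, ← MulOpposite.op_mul]
  congr 1
  funext a
  exact fstep_comm op hRC hlb a s t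

/-- The induced anti-action of the structure monoid. -/
noncomputable def PhiM (hRC : RCLaw op) (hlb : ∀ s : S, Function.Bijective (op s)) :
    StructureMonoid op →* (Function.End (S →₀ ℕ))ᵐᵒᵖ :=
  Con.lift _ (phi op hlb) (phi_rel op hRC hlb)

/-- The candidate inverse of `ν`. -/
noncomputable def Phi (hRC : RCLaw op) (hlb : ∀ s : S, Function.Bijective (op s))
    (m : StructureMonoid op) : S →₀ ℕ :=
  MulOpposite.unop (PhiM op hRC hlb m) 0

theorem Phi_mul_gen (hRC : RCLaw op) (hlb : ∀ s : S, Function.Bijective (op s))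
    (m : StructureMonoid op) (s : S) :
    Phi op hRC hlb (m * smGen op s) = fstep op hlb (Phi op hRC hlb m) s := by
  have h0 : PhiM op hRC hlb (smGen op s) = MulOpposite.op (estep op hlb s) :=
    Con.lift_mk' (phi_rel op hRC hlb) (FreeMonoid.of s)
  rw [Phi, Phi, map_mul, h0, MulOpposite.unop_mul, MulOpposite.unop_op]
  rfl

theorem Phi_piL (hRC : RCLaw op) (hlb : ∀ s : S, Function.Bijective (op s)) :
    ∀ l : List S, Finsupp.toMultiset (Phi op hRC hlb (PiL op l)) = ↑l := by
  intro l
  induction l with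
  | nil =>
      have h1 : Phi op hRC hlb (PiL op []) = 0 := by
        rw [piL_nil, Phi, map_one]
        rfl
      rw [h1, Finsupp.toMultiset_zero, Multiset.coe_nil]
  | cons s l ih =>
      have hsymm : (gE op hlb (Phi op hRC hlb (PiL op l))).symm (OmegaR op l s) = s :=
        gE_symm_eq op hRC hlb (a := Phi op hRC hlb (PiL op l)) (l := l) ih
          (w := OmegaR op l s) (z := s) rfl
      rw [piL_cons, Phi_mul_gen, fstep, toMultiset_add_single, ih, hsymm, Multiset.cons_coe]

theorem Phi_nu (hRC : RCLaw op) (hlb : ∀ s : S, Function.Bijective (op s)) (a : S →₀ ℕ) :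
    Phi op hRC hlb (nu op hRC a) = a := by
  classical
  have h := Phi_piL op hRC hlb (Finsupp.toMultiset a).toList
  rw [← nu_toList op hRC] at h
  rw [Multiset.coe_toList] at h
  have hinj : Function.Injective (Finsupp.toMultiset (α := S)) := by
    intro x y hxy
    have hx := Finsupp.toMultiset_toFinsupp x
    have hy := Finsupp.toMultiset_toFinsupp y
    rw [← hx, ← hy, hxy]
  exact hinj h

theorem nu_injective (hRC : RCLaw op) (hlb : ∀ s : S, Function.Bijective (op s)) :
    Function.Injective (nu op hRC) := by
  intro a b h
  have ha := Phi_nu op hRC hlb a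
  have hb := Phi_nu op hRC hlb b
  rw [← ha, ← hb, h]

theorem nu_zero (hRC : RCLaw op) : nu op hRC 0 = 1 := by
  rw [nu, Finsupp.toMultiset_zero]
  rfl

theorem nu_single (hRC : RCLaw op) (s : S) : nu op hRC (Finsupp.single s 1) = smGen op s := by
  have h0 : (0 : S →₀ ℕ) + Finsupp.single s 1 = Finsupp.single s 1 := zero_add _
  rw [← h0, nu_add_single, nu_zero, one_mul]
  congr 1
  have h1 : (Finsupp.toMultiset (0 : S →₀ ℕ)).toList = [] := by
    rw [Finsupp.toMultiset_zero, Multiset.toList_zero]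
  rw [h1, omegaR_nil]

theorem nu_surjective (hRC : RCLaw op) (hlb : ∀ s : S, Function.Bijective (op s)) :
    Function.Surjective (nu op hRC) := by
  intro m
  obtain ⟨w, rfl⟩ := Con.mk'_surjective m
  suffices H : ∀ l : List S, ∃ a, nu op hRC a = (conGen (rcRel op)).mk' (FreeMonoid.ofList l) by
    obtain ⟨a, ha⟩ := H (FreeMonoid.toList w)
    exact ⟨a, by rw [ha, FreeMonoid.ofList_toList]⟩
  intro l
  induction l using List.reverseRecOn with
  | nil => exact ⟨0, by rw [nu_zero, FreeMonoid.ofList_nil, map_one]⟩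
  | append_singleton l s ih =>
      obtain ⟨a, ha⟩ := ih
      refine ⟨fstep op hlb a s, ?_⟩
      rw [nu_fstep op hRC hlb, ha, FreeMonoid.ofList_append, map_mul, FreeMonoid.ofList_singleton]
      rfl

theorem sum_map_single_eq (l : List S) :
    Finsupp.toMultiset ((l.map fun s => Finsupp.single s 1).sum) = ↑l := by
  induction l with
  | nil => rw [List.map_nil, List.sum_nil, Finsupp.toMultiset_zero, Multiset.coe_nil]
  | cons s l ih =>
      rw [List.map_cons, List.sum_cons, add_comm, toMultiset_add_single, ih, Multiset.cons_coe]

theorem omegaFin_eq (n : ℕ) (x : Fin (n + 1) → S) :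
    OmegaFin op n x
      = OmegaR op (List.ofFn fun i : Fin n => x i.castSucc).reverse (x (Fin.last n)) := by
  induction n with
  | zero =>
      have h : (List.ofFn fun i : Fin 0 => x i.castSucc) = [] := List.ofFn_zero
      rw [h]
      rfl
  | succ n ih =>
      have h1 : OmegaFin op n (fun i : Fin (n + 1) => x i.castSucc)
          = OmegaR op (List.ofFn fun i : Fin n => x i.castSucc.castSucc).reverse
              (x (Fin.last n).castSucc) := ih _
      have h2 : OmegaFin op n
            (fun i : Fin (n + 1) => if (i : ℕ) = n then x (Fin.last (n + 1)) else x i.castSucc)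
          = OmegaR op (List.ofFn fun i : Fin n =>
              if ((i.castSucc : Fin (n + 1)) : ℕ) = n then x (Fin.last (n + 1))
              else x i.castSucc.castSucc).reverse
            (if ((Fin.last n : Fin (n + 1)) : ℕ) = n then x (Fin.last (n + 1))
             else x (Fin.last n).castSucc) := ih _
      have h3 : (List.ofFn fun i : Fin n =>
            if ((i.castSucc : Fin (n + 1)) : ℕ) = n then x (Fin.last (n + 1))
            else x i.castSucc.castSucc)
          = List.ofFn fun i : Fin n => x i.castSucc.castSucc := by
        congr 1
        funext i
        exact if_neg (by simpa using Nat.ne_of_lt i.isLt)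
      have h4 : (if ((Fin.last n : Fin (n + 1)) : ℕ) = n then x (Fin.last (n + 1))
            else x (Fin.last n).castSucc) = x (Fin.last (n + 1)) := if_pos (by simp)
      have h5 : (List.ofFn fun i : Fin (n + 1) => x i.castSucc)
          = (List.ofFn fun i : Fin n => x i.castSucc.castSucc).concat
              (x (Fin.last n).castSucc) := List.ofFn_succ' _
      show op (OmegaFin op n fun i => x i.castSucc)
          (OmegaFin op n fun i => if (i : ℕ) = n then x (Fin.last (n + 1)) else x i.castSucc)
        = OmegaR op (List.ofFn fun i : Fin (n + 1) => x i.castSucc).reverse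
            (x (Fin.last (n + 1)))
      have h6 : ((List.ofFn fun i : Fin n => x i.castSucc.castSucc).concat
            (x (Fin.last n).castSucc)).reverse
          = x (Fin.last n).castSucc :: (List.ofFn fun i : Fin n => x i.castSucc.castSucc).reverse := by
        simp
      rw [h1, h2, h3, h4, h5, h6, omegaR_cons]

theorem piFin_eq (hRC : RCLaw op) (n : ℕ) (x : Fin n → S) :
    PiFin op (smGen op) n x = PiL op (List.ofFn x).reverse := by
  induction n with
  | zero => rfl
  | succ n ih =>
      have key : PiFin op (smGen op) (n + 1) x
          = PiFin op (smGen op) n (fun k : Fin n => x k.castSucc)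
              * smGen op (OmegaFin op n x) := by
        rw [PiFin, PiFin, ← List.ofFn_eq_map, ← List.ofFn_eq_map, List.ofFn_succ',
          List.concat_eq_append, List.prod_append, List.prod_singleton]
        rfl
      have h4 : (List.ofFn x).reverse
          = x (Fin.last n) :: (List.ofFn fun i : Fin n => x i.castSucc).reverse := by
        rw [List.ofFn_succ' x]
        simp
      rw [key, ih, h4, piL_cons, omegaFin_eq op n x]

end Statement11Aux

/-- For an RC-quasigroup `(S,∘)` with structure monoid `M`, the map `ν`
from the free abelian monoid `ℕ^(S)` (finitely supported functions `S → ℕ`) to `M` defined by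
`ν(s₁⋯sₙ) = Πₙ(s₁,…,sₙ)` is well defined and is a right `I`-structure on `M`. -/
theorem statement11 {S : Type*} (op : S → S → S)
    (hRC : RCLaw op) (hlb : ∀ s : S, Function.Bijective (op s)) :
    ∃ ν : (S →₀ ℕ) → StructureMonoid op,
      (∀ l : List S,
        ν ((l.map fun s => Finsupp.single s 1).sum) = PiFin op (smGen op) l.length l.get) ∧
      Function.Bijective ν ∧
      ν 0 = 1 ∧
      (∀ s : S, ν (Finsupp.single s 1) = smGen op s) ∧
      (∀ a : S →₀ ℕ,
        Set.range (fun s : S => ν (a + Finsupp.single s 1)) =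
          Set.range fun s : S => ν a * smGen op s) := by
  classical
  open Statement11Aux in
  refine ⟨nu op hRC, ?_, ⟨nu_injective op hRC hlb, nu_surjective op hRC hlb⟩,
    nu_zero op hRC, nu_single op hRC, ?_⟩
  · intro l
    have h1 : nu op hRC ((l.map fun s => Finsupp.single s 1).sum) = PiL op l := by
      rw [nu, sum_map_single_eq, nuM_coe]
    rw [h1, piFin_eq op hRC, List.ofFn_get]
    exact piL_perm op hRC (List.reverse_perm l).symm
  · intro a
    have hkey : ∀ s : S, nu op hRC (a + Finsupp.single s 1)
        = nu op hRC a * smGen op (OmegaR op (Finsupp.toMultiset a).toList s) :=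
      fun s => nu_add_single op hRC a s
    have hcomp : (fun s : S => nu op hRC (a + Finsupp.single s 1))
        = (fun s : S => nu op hRC a * smGen op s) ∘ OmegaR op (Finsupp.toMultiset a).toList :=
      funext fun s => hkey s
    rw [hcomp, Set.range_comp,
      Function.Surjective.range_eq (omegaR_bij op hlb (Finsupp.toMultiset a).toList).2,
      Set.image_univ]
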